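/- arXiv:2004.07306 — 3 statements merged into one kernel-verified Lean document; each statement's English description precedes it below -/
import Mathlib

section
/- The centralizer of S in SU(2) equals {1, −1}, and this set also equals the center of S. -/
open Matrix Complex

noncomputable section

/-- The special unitary group over a star ring is a group (inverse = conjugate transpose). -/
instance grpSU {n : Type*} [DecidableEq n] [Fintype n] {α : Type*} [CommRing α] [StarRing α] :
    Group ↥(Matrix.specialUnitaryGroup n α) :=
  { (inferInstance : Monoid ↥(Matrix.specialUnitaryGroup n α)) with
    inv := fun A => ⟨star A.1, by
      rw [Matrix.mem_specialUnitaryGroup_iff]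
      refine ⟨Unitary.star_mem A.2.1, ?_⟩
      have hdet : A.1.det = 1 := A.2.2
      rw [Matrix.star_eq_conjTranspose, Matrix.det_conjTranspose, hdet, star_one]⟩
    inv_mul_cancel := fun A => Subtype.ext A.2.1.1 }

/-- `SU(2)`, the special unitary group of `2 × 2` complex matrices. -/
abbrev SU2 := Matrix.specialUnitaryGroup (Fin 2) ℂ

lemma mem_su2 (a b : ℂ) (h : a * (starRingEnd ℂ) a + b * (starRingEnd ℂ) b = 1) :
    !![a, b; -((starRingEnd ℂ) b), (starRingEnd ℂ) a] ∈ Matrix.specialUnitaryGroup (Fin 2) ℂ := by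
  rw [Matrix.mem_specialUnitaryGroup_iff]
  constructor
  · rw [Matrix.mem_unitaryGroup_iff]
    ext i j
    fin_cases i <;> fin_cases j <;>
      simp [Matrix.mul_apply, Fin.sum_univ_two, Matrix.star_eq_conjTranspose,
        Matrix.conjTranspose_apply, Matrix.one_apply] <;>
      first
      | ring1
      | linear_combination h
  · show Matrix.det _ = 1
    rw [Matrix.det_fin_two_of]
    linear_combination h

/-- The element `w = [[0,1],[-1,0]]` of `SU(2)`. -/
def w : SU2 := ⟨!![0, 1; -1, 0], by
  have h := mem_su2 0 1 (by norm_num)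
  simp only [map_zero, _root_.map_one] at h
  exact h⟩

/-- The negative of the identity matrix, as an element of `SU(2)`. -/
def negOne : SU2 := ⟨!![-1, 0; 0, -1], by
  have h := mem_su2 (-1) 0 (by norm_num)
  simp only [map_zero, neg_zero, map_neg, _root_.map_one] at h
  exact h⟩

/-- The underlying set of the diagonal maximal torus of `SU(2)`: the matrices
`diag (a, conj a)` with `a` a complex number of absolute value `1`. -/
def Tset : Set SU2 :=
  {x : SU2 | ∃ a : ℂ, ‖a‖ = 1 ∧
    (x : Matrix (Fin 2) (Fin 2) ℂ) = !![a, 0; 0, (starRingEnd ℂ) a]}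

/-- The maximal discrete 2-toral subgroup `S` of `SU(2)`, generated by `w` together with
the elements of the diagonal maximal torus of 2-power order. -/
def S : Subgroup SU2 :=
  Subgroup.closure ({w} ∪ {x : SU2 | x ∈ Tset ∧ ∃ n : ℕ, x ^ 2 ^ n = 1})

lemma negOne_coe : (negOne : Matrix (Fin 2) (Fin 2) ℂ) = -1 := by
  ext i j
  fin_cases i <;> fin_cases j <;> simp [negOne, Matrix.one_apply]

lemma negOne_comm (y : SU2) : y * negOne = negOne * y := by
  apply Subtype.ext
  show (y : Matrix (Fin 2) (Fin 2) ℂ) * negOne = (negOne : Matrix (Fin 2) (Fin 2) ℂ) * y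
  rw [negOne_coe, mul_neg_one, neg_one_mul]

lemma negOne_mem_S : negOne ∈ S := by
  apply Subgroup.subset_closure
  right
  refine ⟨⟨-1, by simp, ?_⟩, 1, ?_⟩
  · ext i j
    fin_cases i <;> fin_cases j <;> simp [negOne]
  · apply Subtype.ext
    show ((negOne : Matrix (Fin 2) (Fin 2) ℂ)) ^ 2 ^ 1 = 1
    rw [negOne_coe]
    norm_num

/-- `diag(i, -i)` as an element of `SU(2)`. -/
def dI : SU2 := ⟨!![I, 0; 0, (starRingEnd ℂ) I], by
  have h := mem_su2 I 0 (by simp [Complex.conj_I])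
  simpa using h⟩

lemma dI_mem_S : dI ∈ S := by
  apply Subgroup.subset_closure
  right
  refine ⟨⟨I, by simp, rfl⟩, 2, ?_⟩
  apply Subtype.ext
  show ((dI : Matrix (Fin 2) (Fin 2) ℂ)) ^ 2 ^ 2 = 1
  have : ((dI : Matrix (Fin 2) (Fin 2) ℂ)) = !![I, 0; 0, -I] := by
    simp [dI, Complex.conj_I]
  rw [this]
  norm_num [pow_succ, Matrix.mul_fin_two, Complex.I_mul_I]
  ext i j
  fin_cases i <;> fin_cases j <;> simp [Matrix.one_apply]

lemma w_mem_S : w ∈ S := Subgroup.subset_closure (Or.inl rfl)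

lemma eq_one_or_negOne_of_comm (x : SU2) (hw : w * x = x * w) (hd : dI * x = x * dI) :
    x = 1 ∨ x = negOne := by
  have hw' : (w : Matrix (Fin 2) (Fin 2) ℂ) * x = (x : Matrix (Fin 2) (Fin 2) ℂ) * w :=
    congrArg Subtype.val hw
  have hd' : (dI : Matrix (Fin 2) (Fin 2) ℂ) * x = (x : Matrix (Fin 2) (Fin 2) ℂ) * dI :=
    congrArg Subtype.val hd
  set m : Matrix (Fin 2) (Fin 2) ℂ := (x : Matrix (Fin 2) (Fin 2) ℂ) with hm
  have h01 : m 0 1 = 0 := by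
    have := congrFun (congrFun hd' 0) 1
    simp [dI, Matrix.mul_apply, Fin.sum_univ_two, Complex.conj_I] at this
    have hI : (2 : ℂ) * I ≠ 0 := by simp [Complex.I_ne_zero]
    have : (2 : ℂ) * I * m 0 1 = 0 := by linear_combination this
    exact (mul_eq_zero.mp this).resolve_left hI
  have h10 : m 1 0 = 0 := by
    have := congrFun (congrFun hd' 1) 0
    simp [dI, Matrix.mul_apply, Fin.sum_univ_two, Complex.conj_I] at this
    have hI : (2 : ℂ) * I ≠ 0 := by simp [Complex.I_ne_zero]
    have : (2 : ℂ) * I * m 1 0 = 0 := by linear_combination -this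
    exact (mul_eq_zero.mp this).resolve_left hI
  have h0011 : m 1 1 = m 0 0 := by
    have := congrFun (congrFun hw' 0) 1
    simpa [w, Matrix.mul_apply, Fin.sum_univ_two] using this
  have hdet : m.det = 1 := x.2.2
  rw [Matrix.det_fin_two, h01, h10, h0011] at hdet
  have hsq : m 0 0 ^ 2 = 1 := by linear_combination hdet
  have : (m 0 0 - 1) * (m 0 0 + 1) = 0 := by linear_combination hsq
  rcases mul_eq_zero.mp this with h | h
  · left
    apply Subtype.ext
    show m = 1
    ext i j
    have h1 : m 0 0 = 1 := by linear_combination h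
    fin_cases i <;> fin_cases j <;>
      simp [Matrix.one_apply, h01, h10, h1, h0011.trans h1]
  · right
    apply Subtype.ext
    show m = negOne
    have h1 : m 0 0 = -1 := by linear_combination h
    ext i j
    fin_cases i <;> fin_cases j <;>
      simp [negOne, h01, h10, h1, h0011.trans h1]

/-- The centralizer of `S` in `SU(2)` equals `{1, -1}`, which is also the center of `S`. -/
theorem centralizer_of_S :
    ((Subgroup.centralizer (S : Set SU2) : Set SU2) = {1, negOne}) ∧
    (({1, negOne} : Set SU2) = {x : SU2 | x ∈ S ∧ ∀ s ∈ S, s * x = x * s}) := by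
  have hcent : (Subgroup.centralizer (S : Set SU2) : Set SU2) = {1, negOne} := by
    ext x
    constructor
    · intro hx
      rw [SetLike.mem_coe, Subgroup.mem_centralizer_iff] at hx
      exact eq_one_or_negOne_of_comm x (hx w w_mem_S) (hx dI dI_mem_S)
    · rintro (rfl | rfl)
      · exact Subgroup.one_mem _
      · rw [SetLike.mem_coe, Subgroup.mem_centralizer_iff]
        intro g _
        exact (negOne_comm g)
  refine ⟨hcent, ?_⟩
  ext x
  constructor
  · rintro (rfl | rfl)
    · exact ⟨Subgroup.one_mem _, fun s _ => by rw [mul_one, one_mul]⟩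
    · exact ⟨negOne_mem_S, fun s _ => negOne_comm s⟩
  · rintro ⟨hxS, hcomm⟩
    have : x ∈ (Subgroup.centralizer (S : Set SU2) : Set SU2) := by
      rw [SetLike.mem_coe, Subgroup.mem_centralizer_iff]
      exact fun g hg => hcomm g hg
    rw [hcent] at this
    exact this
end
end

section
/- An element diag(a, conj a) of the diagonal maximal torus T of SU(2) normalizes the quaternion subgroup Q if and only if a⁸ = 1; that is, the intersection of T with the normalizer of Q in SU(2) is the cyclic group of order 8 generated by diag(e^{iπ/4}, e^{−iπ/4}). -/
open Matrix Complex

noncomputable section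

/-- The element `j = [[I,0],[0,-I]]` of `SU(2)`. -/
def jmat : SU2 := ⟨!![Complex.I, 0; 0, -Complex.I], by
  have h := mem_su2 Complex.I 0 (by simp [Complex.conj_I, Complex.I_mul_I])
  simp only [map_zero, neg_zero, Complex.conj_I] at h
  exact h⟩

/-- The quaternion subgroup `Q` of `SU(2)`, generated by `i = [[0,1],[-1,0]]` and
`j = [[I,0],[0,-I]]`. -/
def Q : Subgroup SU2 := Subgroup.closure {w, jmat}

/-- The element `diag (e^{iπ/4}, e^{-iπ/4})` of `SU(2)`. -/
def zeta : SU2 :=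
  ⟨!![Complex.exp ((Real.pi : ℂ) * Complex.I / 4), 0; 0,
      Complex.exp (-((Real.pi : ℂ) * Complex.I / 4))], by
    have hconj : (starRingEnd ℂ) (Complex.exp ((Real.pi : ℂ) * Complex.I / 4)) =
        Complex.exp (-((Real.pi : ℂ) * Complex.I / 4)) := by
      rw [← Complex.exp_conj]
      congr 1
      have h4 : (starRingEnd ℂ) (4 : ℂ) = 4 := map_ofNat _ 4
      simp [map_div₀, Complex.conj_ofReal, h4]
      ring
    have h := mem_su2 (Complex.exp ((Real.pi : ℂ) * Complex.I / 4)) 0 (by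
      rw [hconj, ← Complex.exp_add, add_neg_cancel, Complex.exp_zero]
      simp)
    rw [hconj] at h
    simpa using h⟩


section Aux

lemma su2_coe_inv (x : SU2) :
    ((x⁻¹ : SU2) : Matrix (Fin 2) (Fin 2) ℂ) = star (x : Matrix (Fin 2) (Fin 2) ℂ) := rfl

lemma su2_coe_mul (x y : SU2) :
    ((x * y : SU2) : Matrix (Fin 2) (Fin 2) ℂ) =
      (x : Matrix (Fin 2) (Fin 2) ℂ) * (y : Matrix (Fin 2) (Fin 2) ℂ) := rfl

/-- The predicate cutting out diagonal/antidiagonal matrices with 4th-root-of-unity entries. -/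
def Psu (m : Matrix (Fin 2) (Fin 2) ℂ) : Prop :=
  (m 0 1 = 0 ∧ m 1 0 = 0 ∧ (m 0 0) ^ 4 = 1 ∧ (m 1 1) ^ 4 = 1) ∨
  (m 0 0 = 0 ∧ m 1 1 = 0 ∧ (m 0 1) ^ 4 = 1 ∧ (m 1 0) ^ 4 = 1)

/-- The subgroup of `SU2` of matrices satisfying `Psu`. -/
def Hsub : Subgroup SU2 where
  carrier := {x | Psu (x : Matrix (Fin 2) (Fin 2) ℂ)}
  one_mem' := by
    left
    refine ⟨?_, ?_, ?_, ?_⟩ <;> simp [Matrix.one_apply]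
  mul_mem' := by
    rintro x y (⟨h1, h2, h3, h4⟩ | ⟨h1, h2, h3, h4⟩) (⟨g1, g2, g3, g4⟩ | ⟨g1, g2, g3, g4⟩) <;>
      [left; right; right; left] <;>
      refine ⟨?_, ?_, ?_, ?_⟩ <;>
      simp [Psu, su2_coe_mul, Matrix.mul_apply, Fin.sum_univ_two, h1, h2, h3, h4,
        g1, g2, g3, g4, mul_pow]
  inv_mem' := by
    rintro x (⟨h1, h2, h3, h4⟩ | ⟨h1, h2, h3, h4⟩) <;> [left; right] <;>
      refine ⟨?_, ?_, ?_, ?_⟩ <;>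
      simp [Psu, su2_coe_inv, Matrix.star_apply, h1, h2, ← map_pow, h3, h4]

lemma w_mem_Q : w ∈ Q := Subgroup.subset_closure (by simp)

lemma jmat_mem_Q : jmat ∈ Q := Subgroup.subset_closure (by simp)

lemma Q_le_Hsub : Q ≤ Hsub := by
  rw [Q, Subgroup.closure_le]
  rintro x hx
  rcases hx with rfl | rfl
  · right
    refine ⟨?_, ?_, ?_, ?_⟩ <;> norm_num [w, Hsub, Psu]
  · left
    have hI4 : Complex.I ^ 4 = 1 := Complex.I_pow_four
    have hnI4 : (-Complex.I) ^ 4 = 1 := by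
      rw [show ((-Complex.I)) ^ 4 = Complex.I ^ 4 by ring, hI4]
    refine ⟨?_, ?_, ?_, ?_⟩ <;> norm_num [jmat, Hsub, Psu, hI4, hnI4]

/-- Diagonal fourth-root-of-unity matrices are in `Q`. -/
lemma diagQ (y : SU2) (c : ℂ) (hc : c ^ 4 = 1)
    (hy : (y : Matrix (Fin 2) (Fin 2) ℂ) = !![c, 0; 0, (starRingEnd ℂ) c]) : y ∈ Q := by
  have h4 : (c - 1) * (c + 1) * (c - Complex.I) * (c + Complex.I) = 0 := by
    linear_combination hc + (1 - c ^ 2) * Complex.I_sq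
  have key : c = 1 ∨ c = -1 ∨ c = Complex.I ∨ c = -Complex.I := by
    rcases mul_eq_zero.mp h4 with h | h
    · rcases mul_eq_zero.mp h with h | h
      · rcases mul_eq_zero.mp h with h | h
        · exact Or.inl (by linear_combination h)
        · exact Or.inr (Or.inl (by linear_combination h))
      · exact Or.inr (Or.inr (Or.inl (by linear_combination h)))
    · exact Or.inr (Or.inr (Or.inr (by linear_combination h)))
  rcases key with rfl | rfl | rfl | rfl
  · have : y = 1 := Subtype.ext (by
      rw [hy]
      ext i j
      fin_cases i <;> fin_cases j <;> simp [Matrix.one_apply])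
    rw [this]; exact one_mem Q
  · have : y = w * w := Subtype.ext (by
      rw [su2_coe_mul, hy]
      ext i j
      fin_cases i <;> fin_cases j <;> simp [w, Matrix.mul_apply, Fin.sum_univ_two])
    rw [this]; exact mul_mem w_mem_Q w_mem_Q
  · have : y = jmat := Subtype.ext (by
      rw [hy]
      ext i j
      fin_cases i <;> fin_cases j <;> simp [jmat])
    rw [this]; exact jmat_mem_Q
  · have : y = jmat⁻¹ := Subtype.ext (by
      rw [hy, su2_coe_inv]
      ext i j
      fin_cases i <;> fin_cases j <;> simp [jmat, Matrix.star_apply])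
    rw [this]; exact inv_mem jmat_mem_Q

/-- Antidiagonal fourth-root-of-unity matrices are in `Q`. -/
lemma antiQ (y : SU2) (c : ℂ) (hc : c ^ 4 = 1)
    (hy : (y : Matrix (Fin 2) (Fin 2) ℂ) = !![0, c; -((starRingEnd ℂ) c), 0]) : y ∈ Q := by
  have hmem : w⁻¹ * y ∈ Q := by
    refine diagQ _ ((starRingEnd ℂ) c) (by rw [← map_pow, hc, _root_.map_one]) ?_
    rw [su2_coe_mul, su2_coe_inv, hy]
    ext i j
    fin_cases i <;> fin_cases j <;>
      simp [w, Matrix.star_apply, Matrix.mul_apply, Fin.sum_univ_two]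
  have := mul_mem w_mem_Q hmem
  rwa [← mul_assoc, mul_inv_cancel, one_mul] at this

/-- Conjugation of an arbitrary `SU2` element by a diagonal torus element. -/
lemma conj_entries (a : ℂ) (haa : a * (starRingEnd ℂ) a = 1) (x h : SU2)
    (hx : (x : Matrix (Fin 2) (Fin 2) ℂ) = !![a, 0; 0, (starRingEnd ℂ) a]) :
    ((x * h * x⁻¹ : SU2) : Matrix (Fin 2) (Fin 2) ℂ) =
      !![(h : Matrix (Fin 2) (Fin 2) ℂ) 0 0, a ^ 2 * (h : Matrix (Fin 2) (Fin 2) ℂ) 0 1;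
         ((starRingEnd ℂ) a) ^ 2 * (h : Matrix (Fin 2) (Fin 2) ℂ) 1 0,
         (h : Matrix (Fin 2) (Fin 2) ℂ) 1 1] := by
  rw [su2_coe_mul, su2_coe_mul, su2_coe_inv, hx]
  ext i j
  fin_cases i <;> fin_cases j <;>
    simp [Matrix.mul_apply, Fin.sum_univ_two, Matrix.star_apply, -Matrix.cons_mul] <;>
    first
      | ring1
      | linear_combination ((h : Matrix (Fin 2) (Fin 2) ℂ) 0 0) * haa
      | linear_combination ((h : Matrix (Fin 2) (Fin 2) ℂ) 1 1) * haa

/-- A torus element whose entry is an 8th root of unity conjugates `Q` into `Q`. -/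
lemma conj_mem_Q (a : ℂ) (haa : a * (starRingEnd ℂ) a = 1) (h8 : a ^ 8 = 1) (x : SU2)
    (hx : (x : Matrix (Fin 2) (Fin 2) ℂ) = !![a, 0; 0, (starRingEnd ℂ) a]) :
    ∀ h ∈ Q, x * h * x⁻¹ ∈ Q := by
  intro h hh
  have hh' : h ∈ Subgroup.closure ({w, jmat} : Set SU2) := hh
  clear hh
  induction hh' using Subgroup.closure_induction with
  | mem g hg =>
    rcases hg with rfl | rfl
    · refine antiQ _ (a ^ 2) (by rw [← pow_mul]; norm_num [h8]) ?_
      rw [conj_entries a haa x w hx]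
      ext i j
      fin_cases i <;> fin_cases j <;> simp [w, map_pow]
    · have : x * jmat * x⁻¹ = jmat := Subtype.ext (by
        rw [conj_entries a haa x jmat hx]
        ext i j
        fin_cases i <;> fin_cases j <;> simp [jmat])
      rw [this]; exact jmat_mem_Q
  | one =>
    rw [mul_one, mul_inv_cancel]; exact one_mem Q
  | mul g k hg hk pg pk =>
    have := mul_mem pg pk
    rwa [show x * g * x⁻¹ * (x * k * x⁻¹) = x * (g * k) * x⁻¹ by group] at this
  | inv g hg pg =>
    have := inv_mem pg
    rwa [show (x * g * x⁻¹)⁻¹ = x * g⁻¹ * x⁻¹ by group] at this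

lemma key_normalizer (a : ℂ) (ha : ‖a‖ = 1) (x : SU2)
    (hx : (x : Matrix (Fin 2) (Fin 2) ℂ) = !![a, 0; 0, (starRingEnd ℂ) a]) :
    x ∈ Subgroup.normalizer (Q : Set SU2) ↔ a ^ 8 = 1 := by
  have haa : a * (starRingEnd ℂ) a = 1 := by
    rw [Complex.mul_conj, Complex.normSq_eq_norm_sq, ha]; norm_num
  constructor
  · intro hN
    have hwc : x * w * x⁻¹ ∈ Q := (Subgroup.mem_normalizer_iff.mp hN w).mp w_mem_Q
    have hH : Psu ((x * w * x⁻¹ : SU2) : Matrix (Fin 2) (Fin 2) ℂ) := Q_le_Hsub hwc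
    rw [conj_entries a haa x w hx] at hH
    rcases hH with ⟨h1, -, -, -⟩ | ⟨-, -, h3, -⟩
    · exfalso
      simp [w] at h1
      rcases h1 with rfl
      simp at ha
    · simp only [w] at h3
      norm_num at h3
      calc a ^ 8 = (a ^ 2) ^ 4 := by ring
        _ = 1 := h3
  · intro h8
    rw [Subgroup.mem_normalizer_iff]
    intro g
    constructor
    · exact fun hg => conj_mem_Q a haa h8 x hx g hg
    · intro hg
      have hinv : ((x⁻¹ : SU2) : Matrix (Fin 2) (Fin 2) ℂ) =
          !![(starRingEnd ℂ) a, 0; 0, (starRingEnd ℂ) ((starRingEnd ℂ) a)] := by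
        rw [su2_coe_inv, hx]
        ext i j
        fin_cases i <;> fin_cases j <;> simp [Matrix.star_apply]
      have haa' : (starRingEnd ℂ) a * (starRingEnd ℂ) ((starRingEnd ℂ) a) = 1 := by
        simp only [Complex.conj_conj]
        linear_combination haa
      have h8' : ((starRingEnd ℂ) a) ^ 8 = 1 := by rw [← map_pow, h8, _root_.map_one]
      have := conj_mem_Q _ haa' h8' x⁻¹ hinv _ hg
      rwa [show x⁻¹ * (x * g * x⁻¹) * x⁻¹⁻¹ = g by group] at this

lemma zeta_prim :
    IsPrimitiveRoot (Complex.exp ((Real.pi : ℂ) * Complex.I / 4)) 8 := by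
  have h := Complex.isPrimitiveRoot_exp 8 (by norm_num)
  have e : (2 * (Real.pi : ℂ) * Complex.I / ((8 : ℕ) : ℂ)) =
      (Real.pi : ℂ) * Complex.I / 4 := by push_cast; ring
  rwa [e] at h

lemma zeta_pow_coe (n : ℕ) :
    ((zeta ^ n : SU2) : Matrix (Fin 2) (Fin 2) ℂ) =
      !![Complex.exp ((Real.pi : ℂ) * Complex.I / 4) ^ n, 0; 0,
         (starRingEnd ℂ) (Complex.exp ((Real.pi : ℂ) * Complex.I / 4) ^ n)] := by
  have hconj : (starRingEnd ℂ) (Complex.exp ((Real.pi : ℂ) * Complex.I / 4)) =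
      Complex.exp (-((Real.pi : ℂ) * Complex.I / 4)) := by
    rw [← Complex.exp_conj]
    congr 1
    have h4 : (starRingEnd ℂ) (4 : ℂ) = 4 := map_ofNat _ 4
    simp [map_div₀, Complex.conj_ofReal, h4]
    ring
  have hz : (zeta : Matrix (Fin 2) (Fin 2) ℂ) =
      Matrix.diagonal ![Complex.exp ((Real.pi : ℂ) * Complex.I / 4),
        Complex.exp (-((Real.pi : ℂ) * Complex.I / 4))] := by
    show (!![Complex.exp ((Real.pi : ℂ) * Complex.I / 4), 0; 0,
        Complex.exp (-((Real.pi : ℂ) * Complex.I / 4))] : Matrix (Fin 2) (Fin 2) ℂ) = _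
    ext i j
    fin_cases i <;> fin_cases j <;> simp [Matrix.diagonal]
  have : ((zeta ^ n : SU2) : Matrix (Fin 2) (Fin 2) ℂ) =
      (zeta : Matrix (Fin 2) (Fin 2) ℂ) ^ n := SubmonoidClass.coe_pow zeta n
  rw [this, hz, Matrix.diagonal_pow, ← hconj]
  ext i j
  fin_cases i <;> fin_cases j <;> simp [Matrix.diagonal, map_pow]

end Aux

/-- An element `diag (a, conj a)` of the diagonal maximal torus `T` of `SU(2)` normalizes
the quaternion subgroup `Q` if and only if `a ^ 8 = 1`; the intersection of `T` with the
normalizer of `Q` is the cyclic group of order `8` generated by `diag (e^{iπ/4}, e^{-iπ/4})`. -/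
theorem torus_inter_normalizer_Q (T : Subgroup SU2) (hT : (T : Set SU2) = Tset) :
    (∀ x : SU2, x ∈ T →
      (x ∈ Subgroup.normalizer (Q : Set SU2) ↔ ((x : Matrix (Fin 2) (Fin 2) ℂ) 0 0) ^ 8 = 1)) ∧
    T ⊓ Subgroup.normalizer (Q : Set SU2) = Subgroup.zpowers zeta ∧ orderOf zeta = 8 := by
  have hTmem : ∀ x : SU2, x ∈ T ↔ x ∈ Tset := fun x => by
    rw [← SetLike.mem_coe, hT]
  set c := Complex.exp ((Real.pi : ℂ) * Complex.I / 4) with hc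
  have hprim : IsPrimitiveRoot c 8 := zeta_prim
  have part1 : ∀ x : SU2, x ∈ T →
      (x ∈ Subgroup.normalizer (Q : Set SU2) ↔ ((x : Matrix (Fin 2) (Fin 2) ℂ) 0 0) ^ 8 = 1) := by
    intro x hx
    obtain ⟨a, ha, hxa⟩ := (hTmem x).mp hx
    have h00 : (x : Matrix (Fin 2) (Fin 2) ℂ) 0 0 = a := by rw [hxa]; simp
    rw [h00]
    exact key_normalizer a ha x hxa
  have hconjc : (starRingEnd ℂ) c = Complex.exp (-((Real.pi : ℂ) * Complex.I / 4)) := by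
    rw [hc, ← Complex.exp_conj]
    congr 1
    have h4 : (starRingEnd ℂ) (4 : ℂ) = 4 := map_ofNat _ 4
    simp [map_div₀, Complex.conj_ofReal, h4]
    ring
  have hzetaT : zeta ∈ T := by
    rw [hTmem]
    refine ⟨c, ?_, ?_⟩
    · rw [hc, Complex.norm_exp]
      have : ((Real.pi : ℂ) * Complex.I / 4).re = 0 := by
        simp [Complex.div_re]
      rw [this, Real.exp_zero]
    · rw [hconjc, hc]
      rfl
  have hzeta00 : (zeta : Matrix (Fin 2) (Fin 2) ℂ) 0 0 = c := by
    show (!![c, 0; 0, Complex.exp (-((Real.pi : ℂ) * Complex.I / 4))] :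
      Matrix (Fin 2) (Fin 2) ℂ) 0 0 = c
    simp
  have hc8 : c ^ 8 = 1 := hprim.pow_eq_one
  have hzetaN : zeta ∈ Subgroup.normalizer (Q : Set SU2) := by
    rw [part1 zeta hzetaT, hzeta00]; exact hc8
  refine ⟨part1, ?_, ?_⟩
  · apply le_antisymm
    · rintro x ⟨hxT, hxN⟩
      obtain ⟨a, ha, hxa⟩ := (hTmem x).mp hxT
      have h00 : (x : Matrix (Fin 2) (Fin 2) ℂ) 0 0 = a := by rw [hxa]; simp
      have h8 : a ^ 8 = 1 := by
        have := (part1 x hxT).mp hxN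
        rwa [h00] at this
      haveI : NeZero 8 := ⟨by norm_num⟩
      obtain ⟨i, hi, hia⟩ := hprim.eq_pow_of_pow_eq_one h8
      rw [Subgroup.mem_zpowers_iff]
      refine ⟨(i : ℤ), ?_⟩
      rw [zpow_natCast]
      refine Subtype.ext ?_
      rw [zeta_pow_coe i, ← hc, hia, hxa]
    · rw [Subgroup.zpowers_le]
      exact ⟨hzetaT, hzetaN⟩
  · rw [orderOf_eq_iff (by norm_num)]
    constructor
    · refine Subtype.ext ?_
      rw [zeta_pow_coe 8, ← hc, hc8]
      ext i j
      fin_cases i <;> fin_cases j <;> simp [Matrix.one_apply]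
    · intro m hm hm0 hcon
      have : ((zeta ^ m : SU2) : Matrix (Fin 2) (Fin 2) ℂ) 0 0 =
          ((1 : SU2) : Matrix (Fin 2) (Fin 2) ℂ) 0 0 := by rw [hcon]
      rw [zeta_pow_coe m, ← hc] at this
      simp [Matrix.one_apply] at this
      exact hprim.pow_ne_one_of_pos_of_lt hm0.ne' hm this
end
end

section
/- Any two elements of S that do not lie in the diagonal maximal torus T are conjugate in S; that is, for all x, y ∈ S with x ∉ T and y ∉ T, there exists s ∈ S with s·x·s⁻¹ = y. -/
open Matrix Complex

noncomputable section

/-- 2-power roots of unity predicate -/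
def R (a : ℂ) : Prop := ∃ n : ℕ, a ^ (2 ^ n) = 1

lemma R.abs_eq {a : ℂ} (h : R a) : ‖a‖ = 1 := by
  obtain ⟨n, hn⟩ := h
  simpa using Complex.norm_eq_one_of_pow_eq_one hn (by positivity)

lemma R.mul_conj {a : ℂ} (h : R a) : a * (starRingEnd ℂ) a = 1 := by
  have := h.abs_eq
  rw [Complex.mul_conj, ← Complex.sq_norm, this]; norm_num

lemma R.one : R 1 := ⟨0, by norm_num⟩

lemma R.mul {a b : ℂ} (ha : R a) (hb : R b) : R (a * b) := by
  obtain ⟨n, hn⟩ := ha; obtain ⟨m, hm⟩ := hb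
  refine ⟨n + m, ?_⟩
  rw [mul_pow, pow_add, pow_mul, hn, one_pow, one_mul, mul_comm (2^n), pow_mul, hm, one_pow]

lemma R.neg {a : ℂ} (ha : R a) : R (-a) := by
  obtain ⟨n, hn⟩ := ha
  refine ⟨n + 1, ?_⟩
  have hev : Even ((2:ℕ) ^ (n+1)) := by
    exact ⟨2 ^ n, by rw [pow_succ]; ring⟩
  rw [hev.neg_pow, pow_succ, pow_mul, hn, one_pow]

lemma R.conj {a : ℂ} (ha : R a) : R ((starRingEnd ℂ) a) := by
  obtain ⟨n, hn⟩ := ha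
  exact ⟨n, by rw [← map_pow, hn, _root_.map_one]⟩

/-- diagonal 2x2 power -/
lemma diag_pow (a d : ℂ) (k : ℕ) : (!![a, 0; 0, d]) ^ k = !![a ^ k, 0; 0, d ^ k] := by
  induction k with
  | zero => simp [Matrix.one_fin_two]
  | succ k ih => rw [pow_succ, pow_succ, pow_succ, ih, Matrix.mul_fin_two]; norm_num

def Kset : Set SU2 :=
  {x | (∃ a, R a ∧ (x : Matrix (Fin 2) (Fin 2) ℂ) = !![a, 0; 0, (starRingEnd ℂ) a]) ∨
       (∃ a, R a ∧ (x : Matrix (Fin 2) (Fin 2) ℂ) = !![0, a; -((starRingEnd ℂ) a), 0])}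

def K : Subgroup SU2 where
  carrier := Kset
  one_mem' := Or.inl ⟨1, R.one, by simp [Matrix.one_fin_two]⟩
  mul_mem' := by
    rintro x y (⟨a, ha, hx⟩ | ⟨a, ha, hx⟩) (⟨b, hb, hy⟩ | ⟨b, hb, hy⟩) <;>
    [ exact Or.inl ⟨a * b, ha.mul hb, by
        show x.1 * y.1 = _
        rw [hx, hy, Matrix.mul_fin_two]; simp [_root_.map_mul]; try ring⟩;
      exact Or.inr ⟨a * b, ha.mul hb, by
        show x.1 * y.1 = _
        rw [hx, hy, Matrix.mul_fin_two]; simp [_root_.map_mul]; try ring⟩;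
      exact Or.inr ⟨a * (starRingEnd ℂ) b, ha.mul hb.conj, by
        show x.1 * y.1 = _
        rw [hx, hy, Matrix.mul_fin_two]
        simp [_root_.map_mul, Complex.conj_conj]; try ring⟩;
      exact Or.inl ⟨-(a * (starRingEnd ℂ) b), (ha.mul hb.conj).neg, by
        show x.1 * y.1 = _
        rw [hx, hy, Matrix.mul_fin_two]
        simp [_root_.map_mul, Complex.conj_conj]; try ring⟩ ]
  inv_mem' := by
    rintro x (⟨a, ha, hx⟩ | ⟨a, ha, hx⟩)
    · refine Or.inl ⟨(starRingEnd ℂ) a, ha.conj, ?_⟩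
      show star x.1 = _
      rw [Matrix.star_eq_conjTranspose, hx]
      ext i j; fin_cases i <;> fin_cases j <;> simp [Matrix.conjTranspose_apply]
    · refine Or.inr ⟨-a, ha.neg, ?_⟩
      show star x.1 = _
      rw [Matrix.star_eq_conjTranspose, hx]
      ext i j; fin_cases i <;> fin_cases j <;> simp [Matrix.conjTranspose_apply]

lemma S_le_K : S ≤ K := by
  rw [S, Subgroup.closure_le]
  rintro x (rfl | ⟨⟨a, h1, h2⟩, n, hn⟩)
  · exact Or.inr ⟨1, R.one, by simp [w]⟩
  · refine Or.inl ⟨a, ⟨n, ?_⟩, h2⟩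
    have : (x ^ 2 ^ n : SU2).1 = (1 : SU2).1 := by rw [hn]
    rw [SubmonoidClass.coe_pow, h2, diag_pow] at this
    have := congrArg (fun M => M 0 0) this
    simpa using this

/-- Any two elements of `S` not lying in the diagonal maximal torus are conjugate in `S`. -/
theorem conjugate_outside_torus :
    ∀ x y : SU2, x ∈ S → y ∈ S → x ∉ Tset → y ∉ Tset →
      ∃ s ∈ S, s * x * s⁻¹ = y := by
  intro x y hxS hyS hxT hyT
  have hx := S_le_K hxS
  have hy := S_le_K hyS
  rcases hx with ⟨a, ha, hx⟩ | ⟨a, ha, hx⟩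
  · exact absurd ⟨a, ha.abs_eq, hx⟩ hxT
  rcases hy with ⟨b, hb, hy⟩ | ⟨b, hb, hy⟩
  · exact absurd ⟨b, hb.abs_eq, hy⟩ hyT
  -- find square root c of b * conj a
  obtain ⟨c, hc⟩ := IsAlgClosed.exists_pow_nat_eq (b * (starRingEnd ℂ) a) (n := 2) (by norm_num)
  have hRc : R c := by
    obtain ⟨m, hm⟩ := hb.mul ha.conj
    exact ⟨m + 1, by rw [pow_succ, mul_comm (2^m) 2, pow_mul, hc, hm]⟩
  have hcc : c * (starRingEnd ℂ) c = 1 := hRc.mul_conj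
  have haa : a * (starRingEnd ℂ) a = 1 := ha.mul_conj
  have hmem : !![c, 0; 0, (starRingEnd ℂ) c] ∈ Matrix.specialUnitaryGroup (Fin 2) ℂ := by
    have h := mem_su2 c 0 (by simpa using hcc)
    simpa using h
  refine ⟨⟨_, hmem⟩, ?_, ?_⟩
  · apply Subgroup.subset_closure
    right
    refine ⟨⟨c, hRc.abs_eq, rfl⟩, ?_⟩
    obtain ⟨m, hm⟩ := hRc
    refine ⟨m, ?_⟩
    apply Subtype.ext
    rw [SubmonoidClass.coe_pow]
    show (!![c, 0; 0, (starRingEnd ℂ) c]) ^ 2 ^ m = (1 : Matrix (Fin 2) (Fin 2) ℂ)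
    rw [diag_pow, ← map_pow, hm]
    norm_num
    exact Matrix.one_fin_two.symm
  · apply Subtype.ext
    show !![c, 0; 0, (starRingEnd ℂ) c] * x.1 * star !![c, 0; 0, (starRingEnd ℂ) c] = y.1
    rw [hx, hy]
    have hstar : star !![c, 0; 0, (starRingEnd ℂ) c] = !![(starRingEnd ℂ) c, 0; 0, c] := by
      rw [Matrix.star_eq_conjTranspose]
      ext i j; fin_cases i <;> fin_cases j <;> simp [Matrix.conjTranspose_apply]
    rw [hstar, Matrix.mul_fin_two, Matrix.mul_fin_two]
    have hc' : ((starRingEnd ℂ) c) ^ 2 = (starRingEnd ℂ) b * a := by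
      rw [← map_pow, hc, _root_.map_mul, Complex.conj_conj]
    ext i j; fin_cases i <;> fin_cases j <;> simp <;>
      first
      | linear_combination a * hc + b * haa
      | linear_combination (starRingEnd ℂ) a * hc' + (starRingEnd ℂ) b * haa
end
end
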